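/- In the Journé lemma setting, for each R = I × J ∈ R(k,i) with μ_n(I) > 0, define E(R) := I × (J \ ⋃{J′ : I′×J′ ∈ R(k,i), I′ ⊋ I}). Then μ(E(R)) ≥ μ(R)/2. -/

import Mathlib

open MeasureTheory Set

/-- The standard dyadic cube of generation `k` (side length `2^{-k}`) at
position `j` in `ℝⁿ`: `∏_d [j_d 2^{-k}, (j_d+1) 2^{-k})`. -/
def dyCube (n : ℕ) (k : ℤ) (j : Fin n → ℤ) : Set (Fin n → ℝ) :=
  {x | ∀ d, (j d : ℝ) * (2 : ℝ) ^ (-k) ≤ x d ∧ x d < ((j d : ℝ) + 1) * (2 : ℝ) ^ (-k)}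

/-- The position index of the `kk`-th dyadic ancestor `I^{(kk)}` of the cube at
position `j`. -/
def ancIdx {n : ℕ} (j : Fin n → ℤ) (kk : ℕ) : Fin n → ℤ := fun d => (j d).fdiv (2 ^ kk)

/-- The dyadic rectangle `R = I × J` of a product dyadic system. -/
def dyRect (n m : ℕ) (k : ℤ) (j : Fin n → ℤ) (l : ℤ) (i : Fin m → ℤ) :
    Set ((Fin n → ℝ) × (Fin m → ℝ)) :=
  dyCube n k j ×ˢ dyCube m l i

/-- `R^{(kk,0)} = I^{(kk)} × J`: ancestor in the first parameter only. -/
def ancRect (n m : ℕ) (k : ℤ) (j : Fin n → ℤ) (l : ℤ) (i : Fin m → ℤ) (kk : ℕ) :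
    Set ((Fin n → ℝ) × (Fin m → ℝ)) :=
  dyRect n m (k - kk) (ancIdx j kk) l i

/-- The enlargement `Ω̃ = {Mχ_Ω > 1/2}`, where `M` is the strong dyadic maximal
operator over the dyadic rectangles: `x ∈ Ω̃` iff some dyadic rectangle `R ∋ x`
satisfies `μ(R) < 2 μ(R ∩ Ω)`. -/
def tildeSet {n m : ℕ} (μn : Measure (Fin n → ℝ)) (μm : Measure (Fin m → ℝ))
    (Ω : Set ((Fin n → ℝ) × (Fin m → ℝ))) : Set ((Fin n → ℝ) × (Fin m → ℝ)) :=
  {z | ∃ (k : ℤ) (j : Fin n → ℤ) (l : ℤ) (i : Fin m → ℤ),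
    z ∈ dyRect n m k j l i ∧
      μn.prod μm (dyRect n m k j l i) < 2 * μn.prod μm (dyRect n m k j l i ∩ Ω)}

/-- `R = I × J` is 2-maximal in `Ω`: `R ⊆ Ω` but `I × J̃ ⊄ Ω` for any dyadic
`J̃ ⊋ J`. -/
def TwoMaximal {n m : ℕ} (Ω : Set ((Fin n → ℝ) × (Fin m → ℝ)))
    (k : ℤ) (j : Fin n → ℤ) (l : ℤ) (i : Fin m → ℤ) : Prop :=
  dyRect n m k j l i ⊆ Ω ∧
    ∀ (l' : ℤ) (i' : Fin m → ℤ), dyCube m l i ⊂ dyCube m l' i' →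
      ¬ dyRect n m k j l' i' ⊆ Ω

/-- Membership of `R = I × J` in the class `R(kk,i)`: `R ⊆ Ω` is 2-maximal,
`emb₁(R;Ω) ≤ kk` (i.e. the `(kk+1)`-st first-parameter ancestor of `R` is not
contained in `Ω̃`), and `gen₁(R) ≡ i (mod kk+1)`. -/
def InRClass {n m : ℕ} (μn : Measure (Fin n → ℝ)) (μm : Measure (Fin m → ℝ))
    (Ω : Set ((Fin n → ℝ) × (Fin m → ℝ))) (kk : ℕ) (i : ℤ)
    (k : ℤ) (j : Fin n → ℤ) (l : ℤ) (im : Fin m → ℤ) : Prop :=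
  TwoMaximal Ω k j l im ∧
    ¬ ancRect n m k j l im (kk + 1) ⊆ tildeSet μn μm Ω ∧
    k % ((kk : ℤ) + 1) = i

-- 1D: if two dyadic intervals meet at x and k2 ≤ k1 then the k1-interval sits inside.
lemma dyadic1 {k1 k2 a b : ℤ} (h : k2 ≤ k1) {x : ℝ}
    (h1 : (a : ℝ) * 2 ^ (-k1) ≤ x) (h2 : x < ((a : ℝ) + 1) * 2 ^ (-k1))
    (h3 : (b : ℝ) * 2 ^ (-k2) ≤ x) (h4 : x < ((b : ℝ) + 1) * 2 ^ (-k2)) :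
    ∀ y : ℝ, (a : ℝ) * 2 ^ (-k1) ≤ y → y < ((a : ℝ) + 1) * 2 ^ (-k1) →
      (b : ℝ) * 2 ^ (-k2) ≤ y ∧ y < ((b : ℝ) + 1) * 2 ^ (-k2) := by
  set t : ℕ := (k1 - k2).toNat with ht
  have htz : (t : ℤ) = k1 - k2 := Int.toNat_of_nonneg (by omega)
  have hpow : (2 : ℝ) ^ (-k2) = (2 : ℝ) ^ t * 2 ^ (-k1) := by
    rw [← zpow_natCast (2:ℝ) t, htz, ← zpow_add₀ (two_ne_zero)]
    ring_nf
  have hp1 : (0:ℝ) < 2 ^ (-k1) := by positivity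
  have hib : (b : ℤ) * 2 ^ t ≤ a := by
    by_contra hc
    push_neg at hc
    have hc' : (a : ℤ) + 1 ≤ b * 2 ^ t := hc
    have : ((a : ℝ) + 1) ≤ (b : ℝ) * 2 ^ t := by exact_mod_cast hc'
    have : ((a : ℝ) + 1) * 2 ^ (-k1) ≤ (b : ℝ) * 2 ^ (-k2) := by
      rw [hpow]; nlinarith
    linarith
  have hib2 : (a : ℤ) + 1 ≤ (b + 1) * 2 ^ t := by
    by_contra hc
    push_neg at hc
    have hc' : (b + 1 : ℤ) * 2 ^ t ≤ a := by omega
    have : ((b : ℝ) + 1) * 2 ^ t ≤ (a : ℝ) := by exact_mod_cast hc'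
    have : ((b : ℝ) + 1) * 2 ^ (-k2) ≤ (a : ℝ) * 2 ^ (-k1) := by
      rw [hpow]; nlinarith
    linarith
  intro y hy1 hy2
  have hbr : (b : ℝ) * 2 ^ t ≤ (a : ℝ) := by exact_mod_cast hib
  have hbr2 : (a : ℝ) + 1 ≤ ((b : ℝ) + 1) * 2 ^ t := by exact_mod_cast hib2
  constructor
  · rw [hpow]; nlinarith
  · rw [hpow]; nlinarith

lemma dyCube_subset_of_le {n : ℕ} {k1 k2 : ℤ} {j1 j2 : Fin n → ℤ} (h : k2 ≤ k1)
    (hne : (dyCube n k1 j1 ∩ dyCube n k2 j2).Nonempty) :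
    dyCube n k1 j1 ⊆ dyCube n k2 j2 := by
  obtain ⟨x, hx1, hx2⟩ := hne
  intro y hy d
  exact dyadic1 h (hx1 d).1 (hx1 d).2 (hx2 d).1 (hx2 d).2 (y d) (hy d).1 (hy d).2

-- ancestor contains the cube
lemma subset_anc {n : ℕ} (k : ℤ) (j : Fin n → ℤ) (kk : ℕ) :
    dyCube n k j ⊆ dyCube n (k - kk) (ancIdx j kk) := by
  intro y hy d
  set c : ℤ := 2 ^ kk with hc
  have hc0 : (0:ℤ) < c := by positivity
  have hq : (j d).fdiv c = j d / c := Int.fdiv_eq_ediv_of_nonneg _ hc0.le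
  set q : ℤ := j d / c with hqd
  have he := Int.mul_ediv_add_emod (j d) c
  have hr0 : 0 ≤ (j d) % c := Int.emod_nonneg _ hc0.ne'
  have hr1 : (j d) % c < c := Int.emod_lt_of_pos _ hc0
  have hexp : c * (q + 1) = c * q + c := by ring
  have hqle : c * q ≤ j d := by linarith
  have hqlt : j d + 1 ≤ c * (q + 1) := by linarith
  have hpow : (2 : ℝ) ^ (-(k - kk)) = (2 : ℝ) ^ kk * 2 ^ (-k) := by
    rw [← zpow_natCast (2:ℝ) kk, ← zpow_add₀ (two_ne_zero)]
    ring_nf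
  have hp1 : (0:ℝ) < 2 ^ (-k) := by positivity
  have hcr : ((c : ℝ)) = (2:ℝ) ^ kk := by push_cast [hc]; norm_num
  have h1 := (hy d).1
  have h2 := (hy d).2
  have hql : (c : ℝ) * q ≤ (j d : ℝ) := by exact_mod_cast hqle
  have hqr : (j d : ℝ) + 1 ≤ (c : ℝ) * (q + 1) := by exact_mod_cast hqlt
  constructor
  · show ((ancIdx j kk d : ℝ)) * 2 ^ (-(k - kk)) ≤ y d
    have : (ancIdx j kk d : ℝ) = (q : ℝ) := by
      simp [ancIdx, hq, hqd, hc, Int.fdiv_eq_ediv_of_nonneg (j d) (by positivity : (0:ℤ) ≤ 2 ^ kk)]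
    rw [this, hpow, ← hcr]
    nlinarith
  · show y d < ((ancIdx j kk d : ℝ) + 1) * 2 ^ (-(k - kk))
    have : (ancIdx j kk d : ℝ) = (q : ℝ) := by
      simp [ancIdx, hq, hqd, hc, Int.fdiv_eq_ediv_of_nonneg (j d) (by positivity : (0:ℤ) ≤ 2 ^ kk)]
    rw [this, hpow, ← hcr]
    nlinarith

lemma dyCube_measurable {n : ℕ} (k : ℤ) (j : Fin n → ℤ) :
    MeasurableSet (dyCube n k j) := by
  have : dyCube n k j =
      ⋂ d, (fun x : Fin n → ℝ => x d) ⁻¹' Ico ((j d : ℝ) * 2 ^ (-k)) (((j d : ℝ) + 1) * 2 ^ (-k)) := by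
    ext x; simp [dyCube, Set.mem_Ico]
  rw [this]
  exact MeasurableSet.iInter fun d => (measurable_pi_apply d) measurableSet_Ico

/-- For `R = I × J ∈ R(kk,i)` with `μ_n(I) > 0`, the set
`E(R) = I × (J \ ⋃ {J' : I' × J' ∈ R(kk,i), I' ⊋ I})` satisfies
`μ(E(R)) ≥ μ(R)/2`. -/
theorem stmt14 {n m : ℕ} (hn : 0 < n) (hm : 0 < m)
    (μn : Measure (Fin n → ℝ)) (μm : Measure (Fin m → ℝ)) [SFinite μn] [SFinite μm]
    (Ω : Set ((Fin n → ℝ) × (Fin m → ℝ)))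
    (hΩfin : μn.prod μm Ω < ⊤)
    (hΩcov : ∀ x ∈ Ω, ∃ (k : ℤ) (j : Fin n → ℤ) (l : ℤ) (i : Fin m → ℤ),
      x ∈ dyRect n m k j l i ∧ dyRect n m k j l i ⊆ Ω)
    (kk : ℕ) (i : ℤ) (hi₀ : 0 ≤ i) (hik : i ≤ kk)
    (k : ℤ) (j : Fin n → ℤ) (l : ℤ) (im : Fin m → ℤ)
    (hR : InRClass μn μm Ω kk i k j l im)
    (hIpos : 0 < μn (dyCube n k j)) :
    μn.prod μm (dyRect n m k j l im) ≤
      2 * μn.prod μm (dyCube n k j ×ˢ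
        (dyCube m l im \
          ⋃ (k' : ℤ) (j' : Fin n → ℤ) (l' : ℤ) (i' : Fin m → ℤ)
            (_ : InRClass μn μm Ω kk i k' j' l' i' ∧ dyCube n k j ⊂ dyCube n k' j'),
            dyCube m l' i')) := by
  classical
  obtain ⟨⟨hRsub, -⟩, hnotsub, hmod⟩ := hR
  set I := dyCube n k j with hIdef
  set J := dyCube m l im with hJdef
  set S : Set (Fin m → ℝ) :=
    ⋃ (k' : ℤ) (j' : Fin n → ℤ) (l' : ℤ) (i' : Fin m → ℤ)
      (_ : InRClass μn μm Ω kk i k' j' l' i' ∧ dyCube n k j ⊂ dyCube n k' j'),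
      dyCube m l' i' with hSdef
  by_contra hcon
  push_neg at hcon
  rw [dyRect, Measure.prod_prod, Measure.prod_prod] at hcon
  have hSmeas : MeasurableSet S := by
    rw [hSdef]
    refine MeasurableSet.iUnion fun k' => MeasurableSet.iUnion fun j' =>
      MeasurableSet.iUnion fun l' => MeasurableSet.iUnion fun i' =>
      MeasurableSet.iUnion fun _ => dyCube_measurable _ _
  have hsum : μm (J ∩ S) + μm (J \ S) = μm J := measure_inter_add_diff J hSmeas
  have hRfin : μn I * μm J < ⊤ := by
    calc μn I * μm J = μn.prod μm (dyRect n m k j l im) := (Measure.prod_prod _ _).symm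
    _ ≤ μn.prod μm Ω := measure_mono hRsub
    _ < ⊤ := hΩfin
  have hJ0 : μm J ≠ 0 := by
    intro h0
    rw [h0, mul_zero] at hcon
    exact absurd hcon (by simp)
  have hItop : μn I ≠ ⊤ := by
    intro h0
    rw [h0, ENNReal.top_mul hJ0] at hRfin
    exact lt_irrefl _ hRfin
  have hJtop : μm J ≠ ⊤ := by
    intro h0
    rw [h0, ENNReal.mul_top hIpos.ne'] at hRfin
    exact lt_irrefl _ hRfin
  have h2 : 2 * μm (J \ S) < μm J := by
    rw [show 2 * (μn I * μm (J \ S)) = μn I * (2 * μm (J \ S)) by ring] at hcon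
    exact (ENNReal.mul_lt_mul_iff_right hIpos.ne' hItop).1 hcon
  have hdtop : μm (J \ S) ≠ ⊤ := by
    intro h0
    apply hJtop
    have := measure_mono (diff_subset : J \ S ⊆ J) (μ := μm)
    rw [h0] at this
    exact top_le_iff.1 this
  have hds : μm (J \ S) < μm (J ∩ S) := by
    have h2' : μm (J \ S) + μm (J \ S) < μm (J ∩ S) + μm (J \ S) := by
      rw [hsum, ← two_mul]; exact h2
    exact (ENNReal.add_lt_add_iff_right hdtop).1 h2'
  have hBstop : μm (J ∩ S) ≠ ⊤ := by
    intro h0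
    apply hJtop
    have := measure_mono (inter_subset_left : J ∩ S ⊆ J) (μ := μm)
    rw [h0] at this
    exact top_le_iff.1 this
  have hBlt : μm J < 2 * μm (J ∩ S) := by
    rw [← hsum, two_mul]
    exact ENNReal.add_lt_add_left hBstop hds
  have hBs0 : μm (J ∩ S) ≠ 0 := by
    intro h0
    rw [h0] at hds
    exact (hds.trans_le zero_le).false
  have hcast : ((kk + 1 : ℕ) : ℤ) = (kk : ℤ) + 1 := by push_cast; ring
  set I2 := dyCube n (k - ((kk : ℤ) + 1)) (ancIdx j (kk + 1)) with hI2def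
  have hanc : I ⊆ I2 := by
    rw [hIdef, hI2def, ← hcast]
    exact subset_anc k j (kk + 1)
  have hIne : I.Nonempty := nonempty_of_measure_ne_zero hIpos.ne'
  obtain ⟨x0, hx0⟩ := hIne
  have hincl : I2 ×ˢ (J ∩ S) ⊆ Ω := by
    rintro ⟨x, y⟩ ⟨hx, hyJ, hyS⟩
    rw [hSdef] at hyS
    simp only [mem_iUnion] at hyS
    obtain ⟨k', j', l', i', ⟨hR', hss⟩, hy'⟩ := hyS
    have hk'lt : k' < k := by
      by_contra hge
      push_neg at hge
      have hsub2 : dyCube n k' j' ⊆ I :=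
        dyCube_subset_of_le hge ⟨x0, hss.subset hx0, hx0⟩
      exact hss.ne (Subset.antisymm hss.subset hsub2)
    have hdvd : ((kk : ℤ) + 1) ∣ (k - k') := by
      apply Int.dvd_of_emod_eq_zero
      rw [Int.sub_emod, hmod, hR'.2.2]
      simp
    have hk'le : k' ≤ k - ((kk : ℤ) + 1) := by
      have := Int.le_of_dvd (by omega) hdvd
      omega
    have hsub' : I2 ⊆ dyCube n k' j' :=
      dyCube_subset_of_le hk'le ⟨x0, hanc hx0, hss.subset hx0⟩
    exact hR'.1.1 ⟨hsub' hx, hy'⟩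
  have hfin2 : μn I2 * μm (J ∩ S) < ⊤ := by
    rw [← Measure.prod_prod]
    exact lt_of_le_of_lt (measure_mono hincl) hΩfin
  have hI2top : μn I2 ≠ ⊤ := by
    intro h0
    rw [h0, ENNReal.top_mul hBs0] at hfin2
    exact lt_irrefl _ hfin2
  have hI20 : μn I2 ≠ 0 := by
    intro h0
    have := hIpos.trans_le (measure_mono hanc)
    rw [h0] at this
    exact lt_irrefl _ this
  apply hnotsub
  rw [ancRect, hcast]
  intro z hz
  refine ⟨k - ((kk : ℤ) + 1), ancIdx j (kk + 1), l, im, hz, ?_⟩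
  rw [dyRect, Measure.prod_prod]
  have hstep : μn I2 * μm J < 2 * (μn I2 * μm (J ∩ S)) := by
    rw [show 2 * (μn I2 * μm (J ∩ S)) = μn I2 * (2 * μm (J ∩ S)) by ring]
    exact (ENNReal.mul_lt_mul_iff_right hI20 hI2top).2 hBlt
  refine hstep.trans_le ?_
  refine mul_le_mul_right ?_ 2
  rw [← Measure.prod_prod]
  apply measure_mono
  exact subset_inter (prod_mono_right inter_subset_left) hincl
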